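/- Let y ∈ ℝⁿ with yᵢ ≥ 0 for all i, and let λ > 0, 0 ≤ α ≤ 1. Then the minimum of ρ ↦ ‖ρ‖₁ − α‖ρ‖₂ + (1/(2λ))‖ρ − y‖₂² over all ρ ∈ ℝⁿ equals the minimum over ρ ∈ ℝⁿ with ρᵢ ≥ 0, i.e., every minimizer over ℝⁿ has all nonnegative entries. -/
import Mathlib


open Finset

/-- For nonnegative data `y`, the minimum of
`ρ ↦ ‖ρ‖₁ - α‖ρ‖₂ + (1/(2λ))‖ρ - y‖₂²` over all of `ℝⁿ` equals the minimum over
the nonnegative orthant. -/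
theorem stmt4 (n : ℕ) (y : Fin n → ℝ) (hy : ∀ i, 0 ≤ y i)
    (lam α : ℝ) (hlam : 0 < lam) (hα : α ∈ Set.Icc (0 : ℝ) 1) :
    (⨅ ρ : Fin n → ℝ,
      ((∑ i, |ρ i|) - α * Real.sqrt (∑ i, (ρ i) ^ 2) +
        (1 / (2 * lam)) * ∑ i, (ρ i - y i) ^ 2)) =
    ⨅ ρ : {ρ : Fin n → ℝ // ∀ i, 0 ≤ ρ i},
      ((∑ i, |ρ.1 i|) - α * Real.sqrt (∑ i, (ρ.1 i) ^ 2) +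
        (1 / (2 * lam)) * ∑ i, (ρ.1 i - y i) ^ 2) := by
  obtain ⟨hα0, hα1⟩ := hα
  set f : (Fin n → ℝ) → ℝ := fun ρ =>
    ((∑ i, |ρ i|) - α * Real.sqrt (∑ i, (ρ i) ^ 2) +
        (1 / (2 * lam)) * ∑ i, (ρ i - y i) ^ 2) with hf
  have hf0 : ∀ ρ, 0 ≤ f ρ := by
    intro ρ
    have h1 : Real.sqrt (∑ i, (ρ i) ^ 2) ≤ ∑ i, |ρ i| := by
      rw [show (∑ i, (ρ i) ^ 2) = ∑ i, |ρ i| ^ 2 by simp [sq_abs]]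
      have := Finset.sum_sq_le_sq_sum_of_nonneg
        (s := Finset.univ) (f := fun i => |ρ i|) (fun i _ => abs_nonneg _)
      calc Real.sqrt (∑ i, |ρ i| ^ 2) ≤ Real.sqrt ((∑ i, |ρ i|) ^ 2) :=
            Real.sqrt_le_sqrt this
        _ = ∑ i, |ρ i| := Real.sqrt_sq (Finset.sum_nonneg fun i _ => abs_nonneg _)
    have h2 : α * Real.sqrt (∑ i, (ρ i) ^ 2) ≤ ∑ i, |ρ i| := by
      calc α * Real.sqrt (∑ i, (ρ i) ^ 2) ≤ 1 * Real.sqrt (∑ i, (ρ i) ^ 2) := by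
            apply mul_le_mul_of_nonneg_right hα1 (Real.sqrt_nonneg _)
        _ = Real.sqrt (∑ i, (ρ i) ^ 2) := one_mul _
        _ ≤ ∑ i, |ρ i| := h1
    have h3 : 0 ≤ (1 / (2 * lam)) * ∑ i, (ρ i - y i) ^ 2 := by
      apply mul_nonneg (by positivity) (Finset.sum_nonneg fun i _ => sq_nonneg _)
    simp only [hf]
    linarith
  have hbdd : BddBelow (Set.range f) := ⟨0, fun x ⟨ρ, hρ⟩ => hρ ▸ hf0 ρ⟩
  have hbdd2 : BddBelow (Set.range fun ρ : {ρ : Fin n → ℝ // ∀ i, 0 ≤ ρ i} => f ρ.1) :=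
    ⟨0, fun x ⟨ρ, hρ⟩ => hρ ▸ hf0 ρ.1⟩
  have hne : Nonempty {ρ : Fin n → ℝ // ∀ i, 0 ≤ ρ i} := ⟨⟨0, fun i => le_refl 0⟩⟩
  apply le_antisymm
  · exact le_ciInf fun ρ => ciInf_le hbdd ρ.1
  · refine le_ciInf fun ρ => ?_
    have key : f (fun i => |ρ i|) ≤ f ρ := by
      simp only [hf]
      have e1 : ∑ i, |(|ρ i|)| = ∑ i, |ρ i| := by simp
      have e2 : ∑ i, |ρ i| ^ 2 = ∑ i, (ρ i) ^ 2 := by simp [sq_abs]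
      have e3 : ∑ i, (|ρ i| - y i) ^ 2 ≤ ∑ i, (ρ i - y i) ^ 2 := by
        apply Finset.sum_le_sum
        intro i _
        have : ρ i * y i ≤ |ρ i| * y i :=
          mul_le_mul_of_nonneg_right (le_abs_self _) (hy i)
        nlinarith [sq_abs (ρ i)]
      rw [e1, e2]
      have : (1 / (2 * lam)) * ∑ i, (|ρ i| - y i) ^ 2 ≤
          (1 / (2 * lam)) * ∑ i, (ρ i - y i) ^ 2 :=
        mul_le_mul_of_nonneg_left e3 (by positivity)
      linarith
    calc (⨅ ρ : {ρ : Fin n → ℝ // ∀ i, 0 ≤ ρ i}, f ρ.1)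
        ≤ f (fun i => |ρ i|) := ciInf_le hbdd2 ⟨fun i => |ρ i|, fun i => abs_nonneg _⟩
      _ ≤ f ρ := key
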